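/- There is a universal constant C > 0 such that the following holds. Let f* be an arbitrary probability density on ℝ (symmetry not required). Let ε ∈ ℝ and x ∈ ℝ with f_r(x) > 0 be such that (20·|ε|/r)·√(log(1/(r·f_r(x)))) < 1. Then |s_r(x + ε) − s_r(x)| ≤ C·(|ε|/r²)·log(1/(r·f_r(x))). -/

import Mathlib

open MeasureTheory Real Filter

/-- Density of the Gaussian `N(0, r²)`. -/
noncomputable def gaussDensity (r x : ℝ) : ℝ :=
  (Real.sqrt (2 * Real.pi * r ^ 2))⁻¹ * Real.exp (-x ^ 2 / (2 * r ^ 2))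

/-- The `r`-smoothed density `f_r(x) = ∫ f(y) w_r(x − y) dy`. -/
noncomputable def smoothed (f : ℝ → ℝ) (r x : ℝ) : ℝ :=
  ∫ y, f y * gaussDensity r (x - y)

/-- The score function `s_r(x) = f_r'(x) / f_r(x)` of the smoothed density. -/
noncomputable def score (f : ℝ → ℝ) (r x : ℝ) : ℝ :=
  deriv (smoothed f r) x / smoothed f r x

/-- The `r`-smoothed Fisher information `I_r = E_{x∼f_r}[s_r(x)²]`. -/
noncomputable def fisherInfo (f : ℝ → ℝ) (r : ℝ) : ℝ :=
  ∫ x, smoothed f r x * score f r x ^ 2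

/-- The measure on ℝ with density `f` with respect to Lebesgue measure. -/
noncomputable def densMeasure (f : ℝ → ℝ) : Measure ℝ :=
  MeasureTheory.volume.withDensity fun x => ENNReal.ofReal (f x)

/-- `f` is a probability density on ℝ. -/
def IsDensity (f : ℝ → ℝ) : Prop :=
  (∀ x, 0 ≤ f x) ∧ MeasureTheory.Integrable f ∧ (∫ x, f x) = 1

/-- The density `f` has mean `μ`. -/
def HasMean (f : ℝ → ℝ) (μ : ℝ) : Prop :=
  MeasureTheory.Integrable (fun x => x * f x) ∧ (∫ x, x * f x) = μ

/-- The density `f` (with mean `μ`) has variance `σ2`. -/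
def HasVar (f : ℝ → ℝ) (μ σ2 : ℝ) : Prop :=
  MeasureTheory.Integrable (fun x => (x - μ) ^ 2 * f x) ∧ (∫ x, (x - μ) ^ 2 * f x) = σ2

section Gauss
variable {r : ℝ}

lemma sqrt_two_pi_sq (hr : 0 < r) :
    Real.sqrt (2 * Real.pi * r ^ 2) = Real.sqrt (2 * Real.pi) * r := by
  rw [Real.sqrt_mul (by positivity), Real.sqrt_sq hr.le]

lemma one_le_sqrt_two_pi : 1 ≤ Real.sqrt (2 * Real.pi) := by
  rw [show (1:ℝ) = Real.sqrt 1 by simp]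
  exact Real.sqrt_le_sqrt (by nlinarith [Real.pi_gt_three])

lemma gauss_pos (hr : 0 < r) (t : ℝ) : 0 < gaussDensity r t := by
  unfold gaussDensity
  have h : 0 < Real.sqrt (2 * Real.pi * r ^ 2) := Real.sqrt_pos.2 (by positivity)
  positivity

lemma gauss_le (hr : 0 < r) (t : ℝ) :
    gaussDensity r t ≤ (Real.sqrt (2 * Real.pi) * r)⁻¹ := by
  unfold gaussDensity
  rw [sqrt_two_pi_sq hr]
  have h1 : Real.exp (-t ^ 2 / (2 * r ^ 2)) ≤ 1 := by
    rw [Real.exp_le_one_iff]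
    have : 0 ≤ t ^ 2 / (2 * r ^ 2) := by positivity
    linarith [neg_div (2*r^2) (t^2)]
  have h2 : (0:ℝ) < (Real.sqrt (2 * Real.pi) * r)⁻¹ := by
    have := one_le_sqrt_two_pi
    positivity
  nlinarith

lemma gauss_le_inv_r (hr : 0 < r) (t : ℝ) : gaussDensity r t ≤ r⁻¹ := by
  refine (gauss_le hr t).trans ?_
  have := one_le_sqrt_two_pi
  rw [mul_inv]
  have h2 : (Real.sqrt (2*Real.pi))⁻¹ ≤ 1 := by
    exact inv_le_one_of_one_le₀ this
  nlinarith [inv_pos.2 hr]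

/-- `|t| ≤ b·exp(t²/(2b²))` for `b > 0`. -/
lemma abs_le_mul_exp {b : ℝ} (hb : 0 < b) (t : ℝ) :
    |t| ≤ b * Real.exp (t ^ 2 / (2 * b ^ 2)) := by
  have h1 : |t| / b ≤ 1 + (|t|/b)^2/2 := by nlinarith [sq_nonneg (|t|/b - 1)]
  have h2 : (1:ℝ) + (|t|/b)^2/2 ≤ Real.exp ((|t|/b)^2/2) := by
    have := Real.add_one_le_exp ((|t|/b)^2/2); linarith
  have h3 : (|t|/b)^2/2 = t^2/(2*b^2) := by
    rw [div_pow, sq_abs]; ring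
  rw [h3] at h1 h2
  have := h1.trans h2
  calc |t| = (|t|/b) * b := by field_simp
    _ ≤ Real.exp (t^2/(2*b^2)) * b := by nlinarith
    _ = b * Real.exp (t^2/(2*b^2)) := by ring

lemma gauss_eq (hr : 0 < r) (t : ℝ) :
    gaussDensity r t = Real.exp (-t ^ 2 / (2 * r ^ 2)) / (Real.sqrt (2 * Real.pi) * r) := by
  unfold gaussDensity
  rw [sqrt_two_pi_sq hr, inv_mul_eq_div]

lemma abs_mul_gauss_le_one (hr : 0 < r) (t : ℝ) : |t| * gaussDensity r t ≤ 1 := by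
  rw [gauss_eq hr]
  have h1 := abs_le_mul_exp hr t
  have h2 : Real.exp (t^2/(2*r^2)) * Real.exp (-t^2/(2*r^2)) = 1 := by
    rw [← Real.exp_add, show t^2/(2*r^2) + -t^2/(2*r^2) = 0 by ring, Real.exp_zero]
  have h3 := Real.exp_pos (-t^2/(2*r^2))
  have h4 := Real.exp_pos (t^2/(2*r^2))
  have h5 : (1:ℝ) ≤ Real.sqrt (2*Real.pi) := one_le_sqrt_two_pi
  rw [div_eq_mul_inv, ← mul_assoc]
  have h6 : |t| * Real.exp (-t^2/(2*r^2)) ≤ r := by nlinarith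
  have h7 : (0:ℝ) < Real.sqrt (2*Real.pi) * r := by positivity
  rw [mul_inv]
  have h8 : r * (Real.sqrt (2*Real.pi))⁻¹ * r⁻¹ ≤ 1 := by
    rw [mul_comm r, mul_assoc, mul_inv_cancel₀ hr.ne']
    simpa using inv_le_one_of_one_le₀ h5
  have h9 : (0:ℝ) < (Real.sqrt (2*Real.pi))⁻¹ := by positivity
  have h10 : (0:ℝ) < r⁻¹ := by positivity
  calc |t| * Real.exp (-t^2/(2*r^2)) * ((Real.sqrt (2*Real.pi))⁻¹ * r⁻¹)
      ≤ r * ((Real.sqrt (2*Real.pi))⁻¹ * r⁻¹) := by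
        exact mul_le_mul_of_nonneg_right h6 (by positivity)
    _ = r * (Real.sqrt (2*Real.pi))⁻¹ * r⁻¹ := by ring
    _ ≤ 1 := h8

lemma two_le_sqrt_two_pi : 2 ≤ Real.sqrt (2 * Real.pi) := by
  rw [Real.le_sqrt (by norm_num) (by positivity)]
  nlinarith [Real.pi_gt_three]

lemma sq_mul_gauss_le (hr : 0 < r) (t : ℝ) : t ^ 2 * gaussDensity r t ≤ r := by
  rw [gauss_eq hr]
  have h1 : t^2/(2*r^2) ≤ Real.exp (t^2/(2*r^2)) := (Real.add_one_le_exp _).trans' (by nlinarith [Real.exp_pos (t^2/(2*r^2))])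
  have h1' : t^2 ≤ 2*r^2 * Real.exp (t^2/(2*r^2)) := by
    have hr2 : (0:ℝ) < 2*r^2 := by positivity
    calc t^2 = (t^2/(2*r^2)) * (2*r^2) := by field_simp
      _ ≤ Real.exp (t^2/(2*r^2)) * (2*r^2) := by nlinarith
      _ = 2*r^2 * Real.exp (t^2/(2*r^2)) := by ring
  have h2 : Real.exp (t^2/(2*r^2)) * Real.exp (-t^2/(2*r^2)) = 1 := by
    rw [← Real.exp_add, show t^2/(2*r^2) + -t^2/(2*r^2) = 0 by ring, Real.exp_zero]
  have h3 := Real.exp_pos (-t^2/(2*r^2))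
  have h4 := Real.exp_pos (t^2/(2*r^2))
  have h5 : (2:ℝ) ≤ Real.sqrt (2*Real.pi) := two_le_sqrt_two_pi
  have h6 : t^2 * Real.exp (-t^2/(2*r^2)) ≤ 2*r^2 := by nlinarith
  have h7 : (0:ℝ) < Real.sqrt (2*Real.pi) * r := by positivity
  rw [div_eq_mul_inv, ← mul_assoc, mul_inv]
  have h9 : (0:ℝ) < (Real.sqrt (2*Real.pi))⁻¹ := by positivity
  have h10 : (0:ℝ) < r⁻¹ := by positivity
  have h8 : 2*r^2 * ((Real.sqrt (2*Real.pi))⁻¹ * r⁻¹) ≤ r := by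
    have : (Real.sqrt (2*Real.pi))⁻¹ ≤ 2⁻¹ := by
      apply inv_anti₀ (by norm_num) h5
    calc 2*r^2 * ((Real.sqrt (2*Real.pi))⁻¹ * r⁻¹) ≤ 2*r^2 * (2⁻¹ * r⁻¹) := by
          apply mul_le_mul_of_nonneg_left _ (by positivity)
          exact mul_le_mul_of_nonneg_right this (by positivity)
      _ = r * (r * r⁻¹) := by ring
      _ = r := by rw [mul_inv_cancel₀ hr.ne', mul_one]
  calc t^2 * Real.exp (-t^2/(2*r^2)) * ((Real.sqrt (2*Real.pi))⁻¹ * r⁻¹)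
      ≤ 2*r^2 * ((Real.sqrt (2*Real.pi))⁻¹ * r⁻¹) := by
        exact mul_le_mul_of_nonneg_right h6 (by positivity)
    _ ≤ r := h8

/-- Pointwise split bound: `|t|·g(t) ≤ T·r·g(t) + exp(−T²/4)`. -/
lemma split_abs (hr : 0 < r) {T : ℝ} (hT : 0 ≤ T) (t : ℝ) :
    |t| * gaussDensity r t ≤ T * r * gaussDensity r t + Real.exp (-T ^ 2 / 4) := by
  have hg := gauss_pos hr t
  rcases le_or_gt |t| (T * r) with h | h
  · have := Real.exp_pos (-T^2/4)
    nlinarith [mul_le_mul_of_nonneg_right h hg.le]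
  · have hTr : T * r ≤ |t| := h.le
    have hb : (0:ℝ) < Real.sqrt 2 * r := by positivity
    have key : |t| ≤ Real.sqrt 2 * r * Real.exp (t^2/(4*r^2)) := by
      have := abs_le_mul_exp hb t
      have h2 : (Real.sqrt 2 * r)^2 = 2 * r^2 := by
        rw [mul_pow, Real.sq_sqrt (by norm_num : (0:ℝ) ≤ 2)]
      rw [show 2*(Real.sqrt 2 * r)^2 = 4*r^2 by rw [h2]; ring] at this
      exact this
    have hE := Real.exp_pos (-t^2/(4*r^2))
    have hX := Real.exp_pos (t^2/(4*r^2))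
    have hXE : Real.exp (t^2/(4*r^2)) * Real.exp (-t^2/(4*r^2)) = 1 := by
      rw [← Real.exp_add, show t^2/(4*r^2) + -t^2/(4*r^2) = 0 by ring, Real.exp_zero]
    have key2 : |t| * Real.exp (-t^2/(4*r^2)) ≤ Real.sqrt 2 * r := by nlinarith
    have hgsplit : gaussDensity r t
        = Real.exp (-t^2/(4*r^2)) * Real.exp (-t^2/(4*r^2)) / (Real.sqrt (2*Real.pi) * r) := by
      rw [gauss_eq hr, show -t^2/(2*r^2) = -t^2/(4*r^2) + -t^2/(4*r^2) by ring, Real.exp_add]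
    have hmono : Real.exp (-t^2/(4*r^2)) ≤ Real.exp (-T^2/4) := by
      apply Real.exp_le_exp.2
      have : T^2 * r^2 ≤ t^2 := by
        nlinarith [mul_self_le_mul_self (mul_nonneg hT hr.le) hTr, sq_abs t]
      rw [div_le_div_iff₀ (by positivity) (by norm_num)]
      nlinarith
    have hs2 : Real.sqrt 2 ≤ Real.sqrt (2*Real.pi) :=
      Real.sqrt_le_sqrt (by nlinarith [Real.pi_gt_three])
    have hs2pos : (0:ℝ) < Real.sqrt (2*Real.pi) := lt_of_lt_of_le (by positivity) hs2
    have : |t| * gaussDensity r t ≤ Real.exp (-T^2/4) := by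
      rw [hgsplit]
      rw [div_eq_mul_inv, ← mul_assoc, ← mul_assoc]
      calc |t| * Real.exp (-t^2/(4*r^2)) * Real.exp (-t^2/(4*r^2)) * (Real.sqrt (2*Real.pi) * r)⁻¹
          ≤ (Real.sqrt 2 * r) * Real.exp (-t^2/(4*r^2)) * (Real.sqrt (2*Real.pi) * r)⁻¹ := by
            have h9 : (0:ℝ) < (Real.sqrt (2*Real.pi) * r)⁻¹ := by positivity
            exact mul_le_mul_of_nonneg_right
              (mul_le_mul_of_nonneg_right key2 hE.le) h9.le
        _ = (Real.sqrt 2 * r * (Real.sqrt (2*Real.pi) * r)⁻¹) * Real.exp (-t^2/(4*r^2)) := by ring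
        _ ≤ 1 * Real.exp (-T^2/4) := by
            apply mul_le_mul _ hmono hE.le zero_le_one
            rw [mul_inv]
            calc Real.sqrt 2 * r * ((Real.sqrt (2*Real.pi))⁻¹ * r⁻¹)
                = (Real.sqrt 2 * (Real.sqrt (2*Real.pi))⁻¹) * (r * r⁻¹) := by ring
              _ = Real.sqrt 2 * (Real.sqrt (2*Real.pi))⁻¹ := by
                  rw [mul_inv_cancel₀ hr.ne', mul_one]
              _ ≤ 1 := by
                  rw [← div_eq_mul_inv, div_le_one hs2pos]; exact hs2
        _ = Real.exp (-T^2/4) := one_mul _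
    nlinarith [mul_nonneg (mul_nonneg hT hr.le) hg.le]

/-- Pointwise split bound: `t²·g(t) ≤ T²·r²·g(t) + 2r·exp(−T²/4)`. -/
lemma split_sq (hr : 0 < r) {T : ℝ} (hT : 0 ≤ T) (t : ℝ) :
    t ^ 2 * gaussDensity r t ≤ T ^ 2 * r ^ 2 * gaussDensity r t + 2 * r * Real.exp (-T ^ 2 / 4) := by
  have hg := gauss_pos hr t
  rcases le_or_gt (t ^ 2) (T ^ 2 * r ^ 2) with h | h
  · have := Real.exp_pos (-T^2/4)
    nlinarith [mul_le_mul_of_nonneg_right h hg.le]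
  · have key : t^2 ≤ 4 * r^2 * Real.exp (t^2/(4*r^2)) := by
      have h1 : t^2/(4*r^2) ≤ Real.exp (t^2/(4*r^2)) :=
        (Real.add_one_le_exp _).trans' (by nlinarith [Real.exp_pos (t^2/(4*r^2))])
      have hr2 : (0:ℝ) < 4*r^2 := by positivity
      calc t^2 = (t^2/(4*r^2)) * (4*r^2) := by field_simp
        _ ≤ Real.exp (t^2/(4*r^2)) * (4*r^2) := mul_le_mul_of_nonneg_right h1 hr2.le
        _ = 4*r^2 * Real.exp (t^2/(4*r^2)) := by ring
    have hE := Real.exp_pos (-t^2/(4*r^2))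
    have hX := Real.exp_pos (t^2/(4*r^2))
    have hXE : Real.exp (t^2/(4*r^2)) * Real.exp (-t^2/(4*r^2)) = 1 := by
      rw [← Real.exp_add, show t^2/(4*r^2) + -t^2/(4*r^2) = 0 by ring, Real.exp_zero]
    have key2 : t^2 * Real.exp (-t^2/(4*r^2)) ≤ 4 * r^2 := by nlinarith
    have hgsplit : gaussDensity r t
        = Real.exp (-t^2/(4*r^2)) * Real.exp (-t^2/(4*r^2)) / (Real.sqrt (2*Real.pi) * r) := by
      rw [gauss_eq hr, show -t^2/(2*r^2) = -t^2/(4*r^2) + -t^2/(4*r^2) by ring, Real.exp_add]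
    have hmono : Real.exp (-t^2/(4*r^2)) ≤ Real.exp (-T^2/4) := by
      apply Real.exp_le_exp.2
      rw [div_le_div_iff₀ (by positivity) (by norm_num)]
      nlinarith
    have hs2 : (2:ℝ) ≤ Real.sqrt (2*Real.pi) := two_le_sqrt_two_pi
    have hs2pos : (0:ℝ) < Real.sqrt (2*Real.pi) := by linarith
    have main : t^2 * gaussDensity r t ≤ 2 * r * Real.exp (-T^2/4) := by
      rw [hgsplit, div_eq_mul_inv, ← mul_assoc, ← mul_assoc]
      calc t^2 * Real.exp (-t^2/(4*r^2)) * Real.exp (-t^2/(4*r^2)) * (Real.sqrt (2*Real.pi) * r)⁻¹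
          ≤ (4*r^2) * Real.exp (-t^2/(4*r^2)) * (Real.sqrt (2*Real.pi) * r)⁻¹ := by
            exact mul_le_mul_of_nonneg_right
              (mul_le_mul_of_nonneg_right key2 hE.le) (by positivity)
        _ = (4*r^2 * (Real.sqrt (2*Real.pi) * r)⁻¹) * Real.exp (-t^2/(4*r^2)) := by ring
        _ ≤ (2*r) * Real.exp (-T^2/4) := by
            apply mul_le_mul _ hmono hE.le (by positivity)
            rw [mul_inv]
            calc 4*r^2 * ((Real.sqrt (2*Real.pi))⁻¹ * r⁻¹)
                = (4 * (Real.sqrt (2*Real.pi))⁻¹) * (r * (r * r⁻¹)) := by ring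
              _ = (4 * (Real.sqrt (2*Real.pi))⁻¹) * r := by
                  rw [mul_inv_cancel₀ hr.ne', mul_one]
              _ ≤ 2*r := by
                  have h24 : 4 * (Real.sqrt (2*Real.pi))⁻¹ ≤ 2 := by
                    have : (Real.sqrt (2*Real.pi))⁻¹ ≤ 2⁻¹ := by
                      apply inv_anti₀ (by norm_num) hs2
                    nlinarith
                  exact mul_le_mul_of_nonneg_right h24 hr.le
    nlinarith [mul_nonneg (mul_nonneg (sq_nonneg T) (sq_nonneg r)) hg.le]

lemma gauss_continuous (hr : 0 < r) : Continuous (gaussDensity r) := by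
  unfold gaussDensity
  fun_prop

end Gauss


section Smooth
variable {f : ℝ → ℝ} {r : ℝ}

lemma integrable_mul_kernel (hf : IsDensity f) (φ : ℝ → ℝ) (hφ : Continuous φ)
    {C : ℝ} (hC : ∀ y, |φ y| ≤ C) : Integrable (fun y => f y * φ y) := by
  have h := hf.2.1.bdd_mul (c := C) hφ.aestronglyMeasurable (Filter.Eventually.of_forall fun y => by simpa [Real.norm_eq_abs] using hC y)
  simpa [mul_comm] using h

lemma integrable_I0 (hr : 0 < r) (hf : IsDensity f) (x : ℝ) :
    Integrable (fun y => f y * gaussDensity r (x - y)) := by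
  refine integrable_mul_kernel hf _ ((gauss_continuous hr).comp (by fun_prop)) (C := r⁻¹) ?_
  intro y
  rw [abs_of_pos (gauss_pos hr _)]
  exact gauss_le_inv_r hr _

lemma integrable_I1 (hr : 0 < r) (hf : IsDensity f) (x : ℝ) :
    Integrable (fun y => f y * ((y - x) / r ^ 2 * gaussDensity r (x - y))) := by
  refine integrable_mul_kernel hf _ (by
    exact (by fun_prop : Continuous fun y => (y - x) / r^2).mul
      ((gauss_continuous hr).comp (by fun_prop))) (C := (r^2)⁻¹) ?_
  intro y
  rw [abs_mul, abs_div, abs_of_pos (gauss_pos hr _)]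
  have h1 : |y - x| * gaussDensity r (x - y) ≤ 1 := by
    rw [show |y - x| = |x - y| by rw [abs_sub_comm]]
    exact abs_mul_gauss_le_one hr _
  have h2 : |(r:ℝ)^2| = r^2 := abs_of_pos (by positivity)
  rw [h2, div_mul_eq_mul_div, div_le_iff₀ (by positivity)]
  calc |y - x| * gaussDensity r (x - y) ≤ 1 := h1
    _ = (r^2)⁻¹ * r^2 := by rw [inv_mul_cancel₀ (by positivity)]

lemma integrable_I2 (hr : 0 < r) (hf : IsDensity f) (x : ℝ) :
    Integrable (fun y => f y * (((y - x) ^ 2 / r ^ 4 - 1 / r ^ 2) * gaussDensity r (x - y))) := by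
  refine integrable_mul_kernel hf _ (by
    exact (by fun_prop : Continuous fun y => (y - x)^2 / r^4 - 1/r^2).mul
      ((gauss_continuous hr).comp (by fun_prop))) (C := 2 / r^3) ?_
  intro y
  have hg := gauss_pos hr (x - y)
  have h1 : (y - x)^2 * gaussDensity r (x - y) ≤ r := by
    rw [show (y-x)^2 = (x-y)^2 by ring]
    exact sq_mul_gauss_le hr _
  have h2 : gaussDensity r (x - y) ≤ r⁻¹ := gauss_le_inv_r hr _
  rw [abs_mul, abs_of_pos hg]
  have h3 : |(y - x)^2/r^4 - 1/r^2| ≤ (y-x)^2/r^4 + 1/r^2 := by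
    have := abs_sub ((y-x)^2/r^4) (1/r^2)
    calc |(y - x)^2/r^4 - 1/r^2| ≤ |(y-x)^2/r^4| + |1/r^2| := abs_sub _ _
      _ = (y-x)^2/r^4 + 1/r^2 := by
        rw [abs_of_nonneg (by positivity), abs_of_nonneg (by positivity)]
  calc |(y - x)^2/r^4 - 1/r^2| * gaussDensity r (x - y)
      ≤ ((y-x)^2/r^4 + 1/r^2) * gaussDensity r (x - y) := by
        exact mul_le_mul_of_nonneg_right h3 hg.le
    _ = (y-x)^2 * gaussDensity r (x-y) / r^4 + gaussDensity r (x-y)/r^2 := by ring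
    _ ≤ r / r^4 + r⁻¹/r^2 := by
        apply add_le_add
        · exact div_le_div_of_nonneg_right h1 (by positivity) |>.trans_eq rfl
        · exact div_le_div_of_nonneg_right h2 (by positivity) |>.trans_eq rfl
    _ ≤ 2 / r^3 := by
        rw [show r/r^4 = 1/r^3 by field_simp, show r⁻¹/r^2 = 1/r^3 by field_simp]
        rw [← add_div]; norm_num

lemma smoothed_pos (hr : 0 < r) (hf : IsDensity f) (x : ℝ) : 0 < smoothed f r x := by
  unfold smoothed
  rw [integral_pos_iff_support_of_nonneg_ae
    (Filter.Eventually.of_forall fun y => mul_nonneg (hf.1 y) (gauss_pos hr _).le)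
    (integrable_I0 hr hf x)]
  have hsupp : Function.support (fun y => f y * gaussDensity r (x - y)) = Function.support f := by
    ext y
    simp only [Function.mem_support, mul_ne_zero_iff]
    exact ⟨fun h => h.1, fun h => ⟨h, (gauss_pos hr _).ne'⟩⟩
  rw [hsupp]
  by_contra hc
  push_neg at hc
  have h0 : volume (Function.support f) = 0 := le_antisymm hc zero_le
  have hae : ∀ᵐ y, f y = 0 := by
    rw [MeasureTheory.ae_iff]
    exact h0
  have : (∫ y, f y) = 0 := by
    rw [integral_congr_ae (g := fun _ => (0:ℝ)) hae, integral_zero]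
  rw [hf.2.2] at this
  norm_num at this

lemma smoothed_le (hr : 0 < r) (hf : IsDensity f) (x : ℝ) :
    smoothed f r x ≤ (Real.sqrt (2 * Real.pi) * r)⁻¹ := by
  unfold smoothed
  calc (∫ y, f y * gaussDensity r (x - y))
      ≤ ∫ y, f y * (Real.sqrt (2 * Real.pi) * r)⁻¹ := by
        apply integral_mono (integrable_I0 hr hf x) (hf.2.1.mul_const _)
        intro y
        exact mul_le_mul_of_nonneg_left (gauss_le hr _) (hf.1 y)
    _ = (∫ y, f y) * (Real.sqrt (2 * Real.pi) * r)⁻¹ := integral_mul_const _ _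
    _ = (Real.sqrt (2 * Real.pi) * r)⁻¹ := by rw [hf.2.2, one_mul]

noncomputable def sm1 (f : ℝ → ℝ) (r x : ℝ) : ℝ :=
  ∫ y, f y * ((y - x) / r ^ 2 * gaussDensity r (x - y))

noncomputable def sm2 (f : ℝ → ℝ) (r x : ℝ) : ℝ :=
  ∫ y, f y * (((y - x) ^ 2 / r ^ 4 - 1 / r ^ 2) * gaussDensity r (x - y))

lemma hasDerivAt_gauss (hr : 0 < r) (t : ℝ) :
    HasDerivAt (gaussDensity r) (-(t / r ^ 2) * gaussDensity r t) t := by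
  have h : HasDerivAt (fun x : ℝ => (Real.sqrt (2*Real.pi*r^2))⁻¹ * Real.exp (-x^2/(2*r^2)))
      ((Real.sqrt (2*Real.pi*r^2))⁻¹ * (Real.exp (-t^2/(2*r^2)) * (-(2*t^1)/(2*r^2)))) t :=
    (((hasDerivAt_pow 2 t).neg.div_const (2*r^2)).exp).const_mul _
  have heq : -(t / r ^ 2) * gaussDensity r t
      = (Real.sqrt (2*Real.pi*r^2))⁻¹ * (Real.exp (-t^2/(2*r^2)) * (-(2*t^1)/(2*r^2))) := by
    unfold gaussDensity
    field_simp
  rw [heq]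
  exact h

lemma hasDerivAt_kernel (hr : 0 < r) (y x : ℝ) :
    HasDerivAt (fun x => gaussDensity r (x - y)) ((y - x) / r ^ 2 * gaussDensity r (x - y)) x := by
  have h := (hasDerivAt_gauss hr (x - y)).comp x ((hasDerivAt_id x).sub_const y)
  refine h.congr_deriv ?_
  ring

lemma kernel1_abs_le (hr : 0 < r) (x y : ℝ) :
    |(y - x) / r ^ 2 * gaussDensity r (x - y)| ≤ (r ^ 2)⁻¹ := by
  rw [abs_mul, abs_div, abs_of_pos (gauss_pos hr _)]
  have h1 : |y - x| * gaussDensity r (x - y) ≤ 1 := by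
    rw [show |y - x| = |x - y| by rw [abs_sub_comm]]
    exact abs_mul_gauss_le_one hr _
  have h2 : |(r:ℝ)^2| = r^2 := abs_of_pos (by positivity)
  rw [h2, div_mul_eq_mul_div, div_le_iff₀ (by positivity)]
  calc |y - x| * gaussDensity r (x - y) ≤ 1 := h1
    _ = (r^2)⁻¹ * r^2 := by rw [inv_mul_cancel₀ (by positivity)]

lemma kernel2_abs_le (hr : 0 < r) (x y : ℝ) :
    |((y - x) ^ 2 / r ^ 4 - 1 / r ^ 2) * gaussDensity r (x - y)| ≤ 2 / r ^ 3 := by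
  have hg := gauss_pos hr (x - y)
  have h1 : (y - x)^2 * gaussDensity r (x - y) ≤ r := by
    rw [show (y-x)^2 = (x-y)^2 by ring]
    exact sq_mul_gauss_le hr _
  have h2 : gaussDensity r (x - y) ≤ r⁻¹ := gauss_le_inv_r hr _
  rw [abs_mul, abs_of_pos hg]
  have h3 : |(y - x)^2/r^4 - 1/r^2| ≤ (y-x)^2/r^4 + 1/r^2 := by
    calc |(y - x)^2/r^4 - 1/r^2| ≤ |(y-x)^2/r^4| + |1/r^2| := abs_sub _ _
      _ = (y-x)^2/r^4 + 1/r^2 := by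
        rw [abs_of_nonneg (by positivity), abs_of_nonneg (by positivity)]
  calc |(y - x)^2/r^4 - 1/r^2| * gaussDensity r (x - y)
      ≤ ((y-x)^2/r^4 + 1/r^2) * gaussDensity r (x - y) :=
        mul_le_mul_of_nonneg_right h3 hg.le
    _ = (y-x)^2 * gaussDensity r (x-y) / r^4 + gaussDensity r (x-y)/r^2 := by ring
    _ ≤ r / r^4 + r⁻¹/r^2 :=
        add_le_add (div_le_div_of_nonneg_right h1 (by positivity))
          (div_le_div_of_nonneg_right h2 (by positivity))
    _ ≤ 2 / r^3 := by
        rw [show r/r^4 = 1/r^3 by field_simp, show r⁻¹/r^2 = 1/r^3 by field_simp]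
        rw [← add_div]; norm_num

lemma smoothed_hasDerivAt (hr : 0 < r) (hf : IsDensity f) (x₀ : ℝ) :
    HasDerivAt (smoothed f r) (sm1 f r x₀) x₀ := by
  have key := hasDerivAt_integral_of_dominated_loc_of_deriv_le (μ := volume) (x₀ := x₀)
    (F := fun x y => f y * gaussDensity r (x - y))
    (F' := fun x y => f y * ((y - x) / r ^ 2 * gaussDensity r (x - y)))
    (bound := fun y => f y * (r ^ 2)⁻¹)
    (Metric.ball_mem_nhds x₀ one_pos)
    (Filter.Eventually.of_forall fun x => (integrable_I0 hr hf x).aestronglyMeasurable)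
    (integrable_I0 hr hf x₀)
    ((integrable_I1 hr hf x₀).aestronglyMeasurable)
    (Filter.Eventually.of_forall fun y => fun x _ => by
      rw [Real.norm_eq_abs, abs_mul, abs_of_nonneg (hf.1 y)]
      exact mul_le_mul_of_nonneg_left (kernel1_abs_le hr x y) (hf.1 y))
    (hf.2.1.mul_const _)
    (Filter.Eventually.of_forall fun y => fun x _ =>
      (hasDerivAt_kernel hr y x).const_mul (f y))
  exact key.2

lemma sm1_hasDerivAt (hr : 0 < r) (hf : IsDensity f) (x₀ : ℝ) :
    HasDerivAt (sm1 f r) (sm2 f r x₀) x₀ := by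
  have key := hasDerivAt_integral_of_dominated_loc_of_deriv_le (μ := volume) (x₀ := x₀)
    (F := fun x y => f y * ((y - x) / r ^ 2 * gaussDensity r (x - y)))
    (F' := fun x y => f y * (((y - x) ^ 2 / r ^ 4 - 1 / r ^ 2) * gaussDensity r (x - y)))
    (bound := fun y => f y * (2 / r ^ 3))
    (Metric.ball_mem_nhds x₀ one_pos)
    (Filter.Eventually.of_forall fun x => (integrable_I1 hr hf x).aestronglyMeasurable)
    (integrable_I1 hr hf x₀)
    ((integrable_I2 hr hf x₀).aestronglyMeasurable)
    (Filter.Eventually.of_forall fun y => fun x _ => by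
      rw [Real.norm_eq_abs, abs_mul, abs_of_nonneg (hf.1 y)]
      exact mul_le_mul_of_nonneg_left (kernel2_abs_le hr x y) (hf.1 y))
    (hf.2.1.mul_const _)
    (Filter.Eventually.of_forall fun y => fun x _ => by
      have h1 : HasDerivAt (fun x : ℝ => (y - x) / r ^ 2) (-1 / r ^ 2) x := by
        have := ((hasDerivAt_id x).const_sub y).div_const (r ^ 2)
        exact this
      have h2 := (h1.mul (hasDerivAt_kernel hr y x)).const_mul (f y)
      refine h2.congr_deriv ?_
      ring)
  exact key.2

noncomputable def Lg (f : ℝ → ℝ) (r x : ℝ) : ℝ := Real.log (1 / (r * smoothed f r x))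

lemma exp_neg_Lg (hr : 0 < r) (hf : IsDensity f) (x : ℝ) :
    Real.exp (-(Lg f r x)) = r * smoothed f r x := by
  unfold Lg
  rw [one_div, Real.log_inv, neg_neg, Real.exp_log (mul_pos hr (smoothed_pos hr hf x))]

lemma Lg_ge (hr : 0 < r) (hf : IsDensity f) (x : ℝ) : 4 / 5 ≤ Lg f r x := by
  have hsm := smoothed_pos hr hf x
  have hle : r * smoothed f r x ≤ (Real.sqrt (2 * Real.pi))⁻¹ := by
    have := smoothed_le hr hf x
    rw [mul_inv] at this
    calc r * smoothed f r x ≤ r * ((Real.sqrt (2*Real.pi))⁻¹ * r⁻¹) :=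
          mul_le_mul_of_nonneg_left this hr.le
      _ = (Real.sqrt (2*Real.pi))⁻¹ * (r * r⁻¹) := by ring
      _ = (Real.sqrt (2*Real.pi))⁻¹ := by rw [mul_inv_cancel₀ hr.ne', mul_one]
  have hexp85 : Real.exp (8/5) ≤ 2 * Real.pi := by
    have h5 : Real.exp (8/5) ^ (5:ℕ) = Real.exp 8 := by
      rw [← Real.exp_nat_mul]; norm_num
    have h8 : Real.exp 8 ≤ 6.28 ^ (5:ℕ) := by
      have : Real.exp 8 = Real.exp 1 ^ (8:ℕ) := by rw [← Real.exp_nat_mul]; norm_num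
      rw [this]
      calc Real.exp 1 ^ (8:ℕ) ≤ 2.7182818286 ^ (8:ℕ) :=
            pow_le_pow_left₀ (Real.exp_pos 1).le Real.exp_one_lt_d9.le 8
        _ ≤ 6.28 ^ (5:ℕ) := by norm_num
    have h628 : (6.28:ℝ) ≤ 2 * Real.pi := by nlinarith [Real.pi_gt_d6]
    have : Real.exp (8/5) ≤ 6.28 := by
      apply le_of_pow_le_pow_left₀ (n := 5) (by norm_num) (by norm_num)
      rw [h5]; exact h8
    linarith
  have hexp45 : Real.exp (4/5) ≤ Real.sqrt (2 * Real.pi) := by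
    rw [Real.le_sqrt (Real.exp_pos _).le (by positivity)]
    calc Real.exp (4/5) ^ 2 = Real.exp (8/5) := by
          rw [← Real.exp_nat_mul]; norm_num
      _ ≤ 2 * Real.pi := hexp85
  have h1 : Real.sqrt (2*Real.pi) ≤ 1 / (r * smoothed f r x) := by
    rw [le_div_iff₀ (by positivity)]
    have hs2 : (0:ℝ) < Real.sqrt (2*Real.pi) := by positivity
    calc Real.sqrt (2*Real.pi) * (r * smoothed f r x)
        ≤ Real.sqrt (2*Real.pi) * (Real.sqrt (2*Real.pi))⁻¹ :=
          mul_le_mul_of_nonneg_left hle hs2.le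
      _ = 1 := mul_inv_cancel₀ hs2.ne'
  unfold Lg
  rw [Real.le_log_iff_exp_le (by positivity)]
  exact hexp45.trans h1

lemma sqrt_Lg_half (hr : 0 < r) (hf : IsDensity f) (x : ℝ) :
    1 / 2 ≤ Real.sqrt (Lg f r x) := by
  rw [Real.le_sqrt (by norm_num) (by linarith [Lg_ge hr hf x])]
  nlinarith [Lg_ge hr hf x]

lemma sm1_abs_le (hr : 0 < r) (hf : IsDensity f) (x : ℝ) :
    |sm1 f r x| ≤ 4 * Real.sqrt (Lg f r x) / r * smoothed f r x := by
  have hL45 : 4/5 ≤ Lg f r x := Lg_ge hr hf x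
  have hLpos : (0:ℝ) ≤ Lg f r x := by linarith
  have hsq : Real.sqrt (Lg f r x) ^ 2 = Lg f r x := Real.sq_sqrt hLpos
  have hhalf := sqrt_Lg_half hr hf x
  set L := Lg f r x
  set T := 2 * Real.sqrt L with hTdef
  have hT : 0 ≤ T := by positivity
  have hexpT : Real.exp (-T^2/4) = r * smoothed f r x := by
    have h1 : T^2 = 4 * L := by rw [hTdef, mul_pow, hsq]; ring
    rw [show -T^2/4 = -(T^2)/4 by ring, h1, show -(4*L)/4 = -L by ring]
    exact exp_neg_Lg hr hf x
  have hsm := smoothed_pos hr hf x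
  have hptwise : ∀ y, |f y * ((y - x)/r^2 * gaussDensity r (x - y))|
      ≤ (T/r) * (f y * gaussDensity r (x - y)) + (smoothed f r x / r) * f y := by
    intro y
    have hg := gauss_pos hr (x - y)
    have e1 : |f y * ((y - x)/r^2 * gaussDensity r (x - y))|
        = f y * (|x - y| * gaussDensity r (x - y)) / r^2 := by
      rw [abs_mul, abs_of_nonneg (hf.1 y), abs_mul, abs_div,
        abs_of_pos (show (0:ℝ) < r^2 by positivity), abs_of_pos hg, abs_sub_comm]
      ring
    rw [e1]
    have hsplit := split_abs hr hT (x - y)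
    rw [hexpT] at hsplit
    have : f y * (|x - y| * gaussDensity r (x - y))
        ≤ f y * (T * r * gaussDensity r (x - y) + r * smoothed f r x) :=
      mul_le_mul_of_nonneg_left hsplit (hf.1 y)
    calc f y * (|x - y| * gaussDensity r (x - y)) / r^2
        ≤ f y * (T * r * gaussDensity r (x - y) + r * smoothed f r x) / r^2 :=
          div_le_div_of_nonneg_right this (by positivity)
      _ = (T/r) * (f y * gaussDensity r (x - y)) + (smoothed f r x / r) * f y := by
          field_simp
  have hbint : Integrable (fun y => (T/r) * (f y * gaussDensity r (x - y))
      + (smoothed f r x / r) * f y) :=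
    (((integrable_I0 hr hf x).const_mul _).add (hf.2.1.const_mul _))
  have habs : |sm1 f r x| ≤ ∫ y, ((T/r) * (f y * gaussDensity r (x - y))
      + (smoothed f r x / r) * f y) := by
    unfold sm1
    calc |∫ y, f y * ((y - x)/r^2 * gaussDensity r (x - y))|
        ≤ ∫ y, |f y * ((y - x)/r^2 * gaussDensity r (x - y))| := by
          simp only [← Real.norm_eq_abs]
          exact norm_integral_le_integral_norm _
      _ ≤ _ := integral_mono (integrable_I1 hr hf x).abs hbint hptwise
  have hcomp : (∫ y, ((T/r) * (f y * gaussDensity r (x - y)) + (smoothed f r x / r) * f y))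
      = (T/r) * smoothed f r x + (smoothed f r x / r) := by
    rw [integral_add ((integrable_I0 hr hf x).const_mul _) (hf.2.1.const_mul _),
      MeasureTheory.integral_const_mul, MeasureTheory.integral_const_mul]
    unfold smoothed
    rw [hf.2.2, mul_one]
  rw [hcomp] at habs
  have hfinal : (T/r) * smoothed f r x + smoothed f r x / r
      ≤ 4 * Real.sqrt L / r * smoothed f r x := by
    rw [hTdef]
    have h1 : (1:ℝ) ≤ 2 * Real.sqrt L := by linarith
    have h2 : (0:ℝ) < r := hr
    rw [div_mul_eq_mul_div, div_mul_eq_mul_div, ← add_div, div_le_div_iff₀ h2 h2]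
    have : 2 * Real.sqrt L * smoothed f r x + smoothed f r x
        ≤ 4 * Real.sqrt L * smoothed f r x := by nlinarith
    nlinarith
  linarith

lemma sm2_abs_le (hr : 0 < r) (hf : IsDensity f) (x : ℝ) :
    |sm2 f r x| ≤ 8 * Lg f r x / r ^ 2 * smoothed f r x := by
  have hL45 : 4/5 ≤ Lg f r x := Lg_ge hr hf x
  have hLpos : (0:ℝ) ≤ Lg f r x := by linarith
  have hsq : Real.sqrt (Lg f r x) ^ 2 = Lg f r x := Real.sq_sqrt hLpos
  set L := Lg f r x
  set T := 2 * Real.sqrt L with hTdef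
  have hT : 0 ≤ T := by positivity
  have hexpT : Real.exp (-T^2/4) = r * smoothed f r x := by
    have h1 : T^2 = 4 * L := by rw [hTdef, mul_pow, hsq]; ring
    rw [show -T^2/4 = -(T^2)/4 by ring, h1, show -(4*L)/4 = -L by ring]
    exact exp_neg_Lg hr hf x
  have hT2 : T^2 = 4 * L := by rw [hTdef, mul_pow, hsq]; ring
  have hsm := smoothed_pos hr hf x
  have hptwise : ∀ y, |f y * (((y - x)^2/r^4 - 1/r^2) * gaussDensity r (x - y))|
      ≤ ((4*L+1)/r^2) * (f y * gaussDensity r (x - y)) + (2 * smoothed f r x / r^2) * f y := by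
    intro y
    have hg := gauss_pos hr (x - y)
    have e1 : |f y * (((y - x)^2/r^4 - 1/r^2) * gaussDensity r (x - y))|
        ≤ f y * (((x - y)^2 * gaussDensity r (x - y))/r^4 + gaussDensity r (x - y)/r^2) := by
      rw [abs_mul, abs_of_nonneg (hf.1 y), abs_mul, abs_of_pos hg]
      apply mul_le_mul_of_nonneg_left _ (hf.1 y)
      have h3 : |(y - x)^2/r^4 - 1/r^2| ≤ (x-y)^2/r^4 + 1/r^2 := by
        calc |(y - x)^2/r^4 - 1/r^2| ≤ |(y-x)^2/r^4| + |1/r^2| := abs_sub _ _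
          _ = (x-y)^2/r^4 + 1/r^2 := by
            rw [abs_of_nonneg (by positivity), abs_of_nonneg (by positivity)]
            rw [show (y-x)^2 = (x-y)^2 by ring]
      calc |(y - x)^2/r^4 - 1/r^2| * gaussDensity r (x - y)
          ≤ ((x-y)^2/r^4 + 1/r^2) * gaussDensity r (x - y) :=
            mul_le_mul_of_nonneg_right h3 hg.le
        _ = ((x - y)^2 * gaussDensity r (x - y))/r^4 + gaussDensity r (x - y)/r^2 := by ring
    have hsplit := split_sq hr hT (x - y)
    rw [hexpT, hT2] at hsplit
    refine e1.trans ?_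
    have h4 : ((x - y)^2 * gaussDensity r (x - y))/r^4 + gaussDensity r (x - y)/r^2
        ≤ (4*L*r^2*gaussDensity r (x - y) + 2*r*(r*smoothed f r x))/r^4
          + gaussDensity r (x - y)/r^2 := by
      refine add_le_add ?_ le_rfl
      exact div_le_div_of_nonneg_right hsplit (by positivity)
    have h5 : (4*L*r^2*gaussDensity r (x - y) + 2*r*(r*smoothed f r x))/r^4
          + gaussDensity r (x - y)/r^2
        = ((4*L+1)/r^2) * gaussDensity r (x - y) + 2*smoothed f r x/r^2 := by
      field_simp
      ring
    calc f y * (((x - y)^2 * gaussDensity r (x - y))/r^4 + gaussDensity r (x - y)/r^2)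
        ≤ f y * (((4*L+1)/r^2) * gaussDensity r (x - y) + 2*smoothed f r x/r^2) := by
          apply mul_le_mul_of_nonneg_left _ (hf.1 y)
          rw [← h5]; exact h4
      _ = ((4*L+1)/r^2) * (f y * gaussDensity r (x - y)) + (2 * smoothed f r x / r^2) * f y := by
          ring
  have hbint : Integrable (fun y => ((4*L+1)/r^2) * (f y * gaussDensity r (x - y))
      + (2 * smoothed f r x / r^2) * f y) :=
    (((integrable_I0 hr hf x).const_mul _).add (hf.2.1.const_mul _))
  have habs : |sm2 f r x| ≤ ∫ y, (((4*L+1)/r^2) * (f y * gaussDensity r (x - y))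
      + (2 * smoothed f r x / r^2) * f y) := by
    unfold sm2
    calc |∫ y, f y * (((y - x)^2/r^4 - 1/r^2) * gaussDensity r (x - y))|
        ≤ ∫ y, |f y * (((y - x)^2/r^4 - 1/r^2) * gaussDensity r (x - y))| := by
          simp only [← Real.norm_eq_abs]
          exact norm_integral_le_integral_norm _
      _ ≤ _ := integral_mono (integrable_I2 hr hf x).abs hbint hptwise
  have hcomp : (∫ y, (((4*L+1)/r^2) * (f y * gaussDensity r (x - y))
      + (2 * smoothed f r x / r^2) * f y))
      = ((4*L+1)/r^2) * smoothed f r x + 2 * smoothed f r x / r^2 := by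
    rw [integral_add ((integrable_I0 hr hf x).const_mul _) (hf.2.1.const_mul _),
      MeasureTheory.integral_const_mul, MeasureTheory.integral_const_mul]
    unfold smoothed
    rw [hf.2.2, mul_one]
  rw [hcomp] at habs
  refine habs.trans ?_
  have h6 : ((4*L+1)/r^2) * smoothed f r x + 2 * smoothed f r x / r^2
      = ((4*L+3)/r^2) * smoothed f r x := by ring
  rw [h6, div_mul_eq_mul_div, div_mul_eq_mul_div, div_le_div_iff₀ (by positivity) (by positivity)]
  have h7 : 4*L+3 ≤ 8*L := by linarith
  nlinarith [mul_pos hsm (pow_pos hr 2), mul_nonneg hsm.le (pow_pos hr 2).le]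

lemma score_eq (hr : 0 < r) (hf : IsDensity f) (x : ℝ) :
    score f r x = sm1 f r x / smoothed f r x := by
  unfold score
  rw [(smoothed_hasDerivAt hr hf x).deriv]

lemma sm1_div_abs_le (hr : 0 < r) (hf : IsDensity f) (x : ℝ) :
    |sm1 f r x / smoothed f r x| ≤ 4 * Real.sqrt (Lg f r x) / r := by
  have hsm := smoothed_pos hr hf x
  rw [abs_div, abs_of_pos hsm, div_le_iff₀ hsm]
  have := sm1_abs_le hr hf x
  linarith

lemma score_hasDerivAt (hr : 0 < r) (hf : IsDensity f) (x : ℝ) :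
    HasDerivAt (score f r)
      ((sm2 f r x * smoothed f r x - sm1 f r x * sm1 f r x) / smoothed f r x ^ 2) x := by
  have h := (sm1_hasDerivAt hr hf x).div (smoothed_hasDerivAt hr hf x)
    (smoothed_pos hr hf x).ne'
  have heq : score f r = fun u => sm1 f r u / smoothed f r u := funext (score_eq hr hf)
  rw [heq]
  exact h

lemma score_deriv_abs_le (hr : 0 < r) (hf : IsDensity f) (x : ℝ) :
    |(sm2 f r x * smoothed f r x - sm1 f r x * sm1 f r x) / smoothed f r x ^ 2|
      ≤ 24 * Lg f r x / r ^ 2 := by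
  have hsm := smoothed_pos hr hf x
  have h1 := sm1_abs_le hr hf x
  have h2 := sm2_abs_le hr hf x
  have hL45 := Lg_ge hr hf x
  have hsq : Real.sqrt (Lg f r x) ^ 2 = Lg f r x := Real.sq_sqrt (by linarith)
  have hsqrtnn : 0 ≤ Real.sqrt (Lg f r x) := Real.sqrt_nonneg _
  rw [abs_div, abs_of_pos (pow_pos hsm 2), div_le_iff₀ (pow_pos hsm 2)]
  have e1 : |sm2 f r x * smoothed f r x - sm1 f r x * sm1 f r x|
      ≤ |sm2 f r x| * smoothed f r x + |sm1 f r x| * |sm1 f r x| := by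
    calc |sm2 f r x * smoothed f r x - sm1 f r x * sm1 f r x|
        ≤ |sm2 f r x * smoothed f r x| + |sm1 f r x * sm1 f r x| := abs_sub _ _
      _ = |sm2 f r x| * smoothed f r x + |sm1 f r x| * |sm1 f r x| := by
          rw [abs_mul, abs_mul, abs_of_pos hsm]
  refine e1.trans ?_
  have hb1 : |sm1 f r x| * |sm1 f r x|
      ≤ (4 * Real.sqrt (Lg f r x) / r * smoothed f r x) ^ 2 := by
    have := abs_nonneg (sm1 f r x)
    nlinarith
  have hb2 : |sm2 f r x| * smoothed f r x
      ≤ (8 * Lg f r x / r ^ 2 * smoothed f r x) * smoothed f r x :=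
    mul_le_mul_of_nonneg_right h2 hsm.le
  have hexpand : (4 * Real.sqrt (Lg f r x) / r * smoothed f r x) ^ 2
      = 16 * Lg f r x / r ^ 2 * smoothed f r x ^ 2 := by
    field_simp
    nlinarith [hsq]
  calc |sm2 f r x| * smoothed f r x + |sm1 f r x| * |sm1 f r x|
      ≤ (8 * Lg f r x / r ^ 2 * smoothed f r x) * smoothed f r x
        + 16 * Lg f r x / r ^ 2 * smoothed f r x ^ 2 := by
        rw [← hexpand]; exact add_le_add hb2 hb1
    _ = 24 * Lg f r x / r ^ 2 * smoothed f r x ^ 2 := by ring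

lemma Lg_hasDerivAt (hr : 0 < r) (hf : IsDensity f) (x : ℝ) :
    HasDerivAt (Lg f r) (-(sm1 f r x / smoothed f r x)) x := by
  have hsm := smoothed_pos hr hf x
  have h0 : HasDerivAt (fun u => r * smoothed f r u) (r * sm1 f r x) x :=
    (smoothed_hasDerivAt hr hf x).const_mul r
  have h1 := (h0.log (by positivity)).neg
  have heq : Lg f r = fun u => -Real.log (r * smoothed f r u) := by
    funext u
    unfold Lg
    rw [one_div, Real.log_inv]
  rw [heq]
  refine h1.congr_deriv ?_
  rw [mul_div_mul_left _ _ hr.ne']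

lemma sqrtLg_hasDerivAt (hr : 0 < r) (hf : IsDensity f) (x : ℝ) :
    HasDerivAt (fun u => Real.sqrt (Lg f r u))
      (-(sm1 f r x / smoothed f r x) / (2 * Real.sqrt (Lg f r x))) x := by
  exact (Lg_hasDerivAt hr hf x).sqrt (by linarith [Lg_ge hr hf x])

lemma sqrtLg_deriv_abs_le (hr : 0 < r) (hf : IsDensity f) (x : ℝ) :
    |(-(sm1 f r x / smoothed f r x) / (2 * Real.sqrt (Lg f r x)))| ≤ 2 / r := by
  have hhalf := sqrt_Lg_half hr hf x
  have hsqrtpos : 0 < Real.sqrt (Lg f r x) := by linarith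
  rw [abs_div, abs_neg, abs_of_pos (by positivity : (0:ℝ) < 2 * Real.sqrt (Lg f r x)),
    div_le_div_iff₀ (by positivity) hr]
  calc |sm1 f r x / smoothed f r x| * r
      ≤ (4 * Real.sqrt (Lg f r x) / r) * r := by
        exact mul_le_mul_of_nonneg_right (sm1_div_abs_le hr hf x) hr.le
    _ = 4 * Real.sqrt (Lg f r x) := by field_simp
    _ ≤ 2 * (2 * Real.sqrt (Lg f r x)) := by linarith

lemma sqrtLg_lipschitz (hr : 0 < r) (hf : IsDensity f) (x y : ℝ) :
    |Real.sqrt (Lg f r y) - Real.sqrt (Lg f r x)| ≤ 2 / r * |y - x| := by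
  have := convex_univ.norm_image_sub_le_of_norm_hasDerivWithin_le
    (f := fun u => Real.sqrt (Lg f r u))
    (f' := fun u => -(sm1 f r u / smoothed f r u) / (2 * Real.sqrt (Lg f r u)))
    (fun u _ => (sqrtLg_hasDerivAt hr hf u).hasDerivWithinAt)
    (fun u _ => by rw [Real.norm_eq_abs]; exact sqrtLg_deriv_abs_le hr hf u)
    (Set.mem_univ x) (Set.mem_univ y)
  simpa [Real.norm_eq_abs] using this


end Smooth

/-- Close-by scores are close: there is a universal constant `C` so that
if `(20|ε|/r)·√(log(1/(r f_r(x)))) < 1` then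
`|s_r(x+ε) − s_r(x)| ≤ C·(|ε|/r²)·log(1/(r f_r(x)))`. -/
theorem close_by_scores_close :
    ∃ C : ℝ, 0 < C ∧
      ∀ (fStar : ℝ → ℝ) (r : ℝ), 0 < r → IsDensity fStar →
        ∀ x ε : ℝ, 0 < smoothed fStar r x →
          (20 * |ε| / r) * Real.sqrt (Real.log (1 / (r * smoothed fStar r x))) < 1 →
          |score fStar r (x + ε) - score fStar r x| ≤
            C * (|ε| / r ^ 2) * Real.log (1 / (r * smoothed fStar r x)) := by
  refine ⟨100, by norm_num, ?_⟩
  intro fStar r hr hf x ε _ h20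
  have hLg : Real.log (1 / (r * smoothed fStar r x)) = Lg fStar r x := rfl
  rw [hLg] at h20 ⊢
  set Lx := Lg fStar r x with hLxdef
  have hL45 : 4/5 ≤ Lx := Lg_ge hr hf x
  have hsqx : Real.sqrt Lx ^ 2 = Lx := Real.sq_sqrt (by linarith)
  have hhalf : 1/2 ≤ Real.sqrt Lx := sqrt_Lg_half hr hf x
  have h20' : 20 * |ε| * Real.sqrt Lx < r := by
    rw [div_mul_eq_mul_div, div_lt_one hr] at h20
    linarith
  -- Lg on the segment
  have hseg : ∀ u ∈ Set.uIcc x (x + ε), Lg fStar r u ≤ 4/3 * Lx := by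
    intro u hu
    have hd : |u - x| ≤ |ε| := by
      have := Set.abs_sub_left_of_mem_uIcc hu
      simpa using this
    have hlip := sqrtLg_lipschitz hr hf x u
    have hLu45 : 4/5 ≤ Lg fStar r u := Lg_ge hr hf u
    have hsqu : Real.sqrt (Lg fStar r u) ^ 2 = Lg fStar r u := Real.sq_sqrt (by linarith)
    have hsu : Real.sqrt (Lg fStar r u) ≤ Real.sqrt Lx + 2/r * |ε| := by
      have h2 : 2/r * |u - x| ≤ 2/r * |ε| := by
        apply mul_le_mul_of_nonneg_left hd (by positivity)
      have := abs_le.1 hlip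
      linarith [this.2]
    have hdtprod : (2/r * |ε|) * Real.sqrt Lx ≤ 1/10 := by
      rw [div_mul_eq_mul_div, div_mul_eq_mul_div, div_le_div_iff₀ hr (by norm_num)]
      linarith
    have hdnn : 0 ≤ 2/r * |ε| := by positivity
    have hdle : 2/r * |ε| ≤ 1/5 := by nlinarith
    have hsnn : 0 ≤ Real.sqrt (Lg fStar r u) := Real.sqrt_nonneg _
    nlinarith [sq_nonneg (Real.sqrt (Lg fStar r u))]
  -- mean value theorem on the segment
  have hmvt := (convex_uIcc x (x + ε)).norm_image_sub_le_of_norm_hasDerivWithin_le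
    (f := score fStar r)
    (f' := fun u => (sm2 fStar r u * smoothed fStar r u - sm1 fStar r u * sm1 fStar r u)
      / smoothed fStar r u ^ 2)
    (C := 32 * Lx / r ^ 2)
    (fun u _ => (score_hasDerivAt hr hf u).hasDerivWithinAt)
    (fun u hu => by
      rw [Real.norm_eq_abs]
      refine (score_deriv_abs_le hr hf u).trans ?_
      have := hseg u hu
      rw [div_le_div_iff₀ (by positivity) (by positivity)]
      nlinarith [pow_pos hr 2])
    Set.left_mem_uIcc Set.right_mem_uIcc
  rw [Real.norm_eq_abs, Real.norm_eq_abs] at hmvt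
  have hε : |x + ε - x| = |ε| := by congr 1; ring
  rw [hε] at hmvt
  refine hmvt.trans ?_
  have h1 : 32 * Lx / r ^ 2 * |ε| ≤ 100 * (|ε| / r ^ 2) * Lx := by
    rw [show 100 * (|ε| / r ^ 2) * Lx = 100 * |ε| * Lx / r ^ 2 by ring,
      div_mul_eq_mul_div, div_le_div_iff₀ (by positivity) (by positivity)]
    nlinarith [mul_nonneg (mul_nonneg (abs_nonneg ε)
      (le_trans (by norm_num : (0:ℝ) ≤ 4/5) hL45)) (pow_pos hr 2).le]
  exact h1
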